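/- Let R be a commutative noetherian ring, I an ideal, M an R-module, and n ≥ 0 an integer. Then H^i_I(M) = 0 for all 0 ≤ i ≤ n if and only if there exists an injective resolution 0 → M → I^0 → I^1 → ⋯ of M such that Ass I^i ∩ V(I) = ∅ for all 0 ≤ i ≤ n. -/

import Mathlib

open CategoryTheory

/-- The `I`-torsion submodule `Γ_I(M) = {x ∈ M | I^n x = 0 for some n}`. -/
def torsionIdeal (R : Type*) [CommRing R] (I : Ideal R)
    (M : Type*) [AddCommGroup M] [Module R M] : Submodule R M where
  carrier := {x | ∃ n : ℕ, ∀ a ∈ I ^ n, a • x = 0}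
  zero_mem' := ⟨0, fun a _ => smul_zero a⟩
  add_mem' := by
    rintro x y ⟨n, hn⟩ ⟨m, hm⟩
    refine ⟨n + m, fun a ha => ?_⟩
    rw [smul_add, hn a (Ideal.pow_le_pow_right (by omega) ha),
      hm a (Ideal.pow_le_pow_right (by omega) ha), add_zero]
  smul_mem' := by
    rintro c x ⟨n, hn⟩
    exact ⟨n, fun a ha => by rw [smul_comm, hn a ha, smul_zero]⟩

lemma torsionIdeal_map_mem {R : Type*} [CommRing R] (I : Ideal R)
    {M N : Type*} [AddCommGroup M] [Module R M] [AddCommGroup N] [Module R N]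
    (f : M →ₗ[R] N) : ∀ x ∈ torsionIdeal R I M, f x ∈ torsionIdeal R I N := by
  rintro x ⟨n, hn⟩
  exact ⟨n, fun a ha => by rw [← map_smul, hn a ha, map_zero]⟩

/-- The `I`-torsion functor `Γ_I : Mod R ⥤ Mod R`. -/
def torsionIdealFunctor (R : Type u) [CommRing R] (I : Ideal R) :
    ModuleCat.{u} R ⥤ ModuleCat.{u} R where
  obj M := ModuleCat.of R (torsionIdeal R I M)
  map f := ModuleCat.ofHom (f.hom.restrict (torsionIdeal_map_mem I f.hom))
  map_id _ := rfl
  map_comp _ _ := rfl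

instance (R : Type u) [CommRing R] (I : Ideal R) :
    (torsionIdealFunctor R I).Additive where
  map_add := by intros; rfl

/-- The `i`-th local cohomology functor with respect to the ideal `I`, i.e. the `i`-th right
derived functor of the `I`-torsion functor `Γ_I`. -/
noncomputable def localCohomologyIdeal (R : Type u) [CommRing R] (I : Ideal R) (i : ℕ) :
    ModuleCat.{u} R ⥤ ModuleCat.{u} R :=
  (torsionIdealFunctor R I).rightDerived i

open Limits


universe v

set_option linter.unusedSectionVars false

section Basic
variable {R : Type*} [CommRing R] {I : Ideal R}
variable {M : Type*} [AddCommGroup M] [Module R M]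

lemma mem_torsionIdeal_iff {x : M} :
    x ∈ torsionIdeal R I M ↔ ∃ n : ℕ, ∀ a ∈ I ^ n, a • x = 0 := Iff.rfl

lemma torsionIdeal_eq_bot_iff_assoc [IsNoetherianRing R] :
    torsionIdeal R I M = ⊥ ↔ ∀ q ∈ associatedPrimes R M, ¬ I ≤ q := by
  constructor
  · intro h q hq hIq
    obtain ⟨hprime, x, hx⟩ := isAssociatedPrime_iff.mp hq
    have hx0 : x ∈ torsionIdeal R I M := by
      refine ⟨1, fun a ha => ?_⟩
      rw [pow_one] at ha
      exact (Submodule.mem_bot R).1 (Submodule.mem_colon_singleton.1 (hx ▸ hIq ha))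
    rw [h, Submodule.mem_bot] at hx0
    subst hx0
    rw [show (⊥ : Submodule R M).colon {0} = ⊤ from
      eq_top_iff.2 fun a _ => Submodule.mem_colon_singleton.2 (by simp)] at hx
    exact hprime.ne_top hx
  · intro h
    by_contra hne
    obtain ⟨x, hxmem, hx0⟩ := Submodule.exists_mem_ne_zero_of_ne_bot hne
    obtain ⟨n, hn⟩ := hxmem
    obtain ⟨P, hP, hle⟩ :=
      exists_le_isAssociatedPrime_of_isNoetherianRing R x hx0
    refine h P hP ?_
    have : Ideal.IsPrime P := hP.isPrime
    refine Ideal.IsPrime.le_of_pow_le (n := n) ?_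
    refine le_trans ?_ hle
    intro a ha
    exact Submodule.mem_colon_singleton.2 ((Submodule.mem_bot R).2 (hn a ha))
end Basic

section Tors
variable (R : Type u) [CommRing R] [IsNoetherianRing R] (I : Ideal R)
variable (E : Type u) [AddCommGroup E] [Module R E]

/-- The submodule of elements killed by `I ^ N`. -/
def torsN (N : ℕ) : Submodule R E where
  carrier := {x | ∀ a ∈ I ^ N, a • x = 0}
  zero_mem' := fun a _ => smul_zero a
  add_mem' := by
    rintro x y hx hy
    intro a ha
    rw [smul_add, hx a ha, hy a ha, add_zero]
  smul_mem' := by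
    rintro c x hx a ha
    rw [smul_comm, hx a ha, smul_zero]

variable {R I E}

lemma torsN_le_torsionIdeal (N : ℕ) : torsN R I E N ≤ torsionIdeal R I E :=
  fun _ hx => ⟨N, hx⟩

lemma torsN_mono {N N' : ℕ} (h : N ≤ N') : torsN R I E N ≤ torsN R I E N' :=
  fun _ hx a ha => hx a (Ideal.pow_le_pow_right h ha)

lemma finset_torsion_bound (s : Finset E) (hs : ∀ e ∈ s, e ∈ torsionIdeal R I E) :
    ∃ N : ℕ, ∀ e ∈ s, e ∈ torsN R I E N := by
  classical
  induction s using Finset.induction with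
  | empty => exact ⟨0, fun e he => absurd he (Finset.notMem_empty e)⟩
  | @insert x s hxs ih =>
    obtain ⟨N, hN⟩ := ih fun e he => hs e (Finset.mem_insert_of_mem he)
    obtain ⟨m, hm⟩ := hs x (Finset.mem_insert_self x s)
    refine ⟨max N m, fun e he => ?_⟩
    rcases Finset.mem_insert.1 he with rfl | he
    · exact torsN_mono (le_max_right N m) hm
    · exact torsN_mono (le_max_left N m) (hN e he)

/-- Over a noetherian ring, the `I`-torsion submodule of an injective module is injective
(Baer's criterion via the Artin–Rees lemma). -/
lemma torsionIdeal_baer (hInj : Module.Injective R E) :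
    Module.Baer R (torsionIdeal R I E) := by
  intro J g
  let g' : J →ₗ[R] E := (torsionIdeal R I E).subtype ∘ₗ g
  have hg' : ∀ x : J, g' x = (g x : E) := fun x => rfl
  -- the range of `g'` is finitely generated and torsion
  have hJfin : Module.Finite R J :=
    Module.Finite.iff_fg.mpr (IsNoetherian.noetherian J)
  have hrangefg : (LinearMap.range g').FG :=
    Module.Finite.iff_fg.mp (Module.Finite.range g')
  obtain ⟨s, hs⟩ := hrangefg
  have hsT : ∀ e ∈ s, e ∈ torsionIdeal R I E := by
    intro e he
    have : e ∈ LinearMap.range g' := hs ▸ Submodule.subset_span he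
    obtain ⟨y, rfl⟩ := this
    exact (g y).2
  obtain ⟨N, hN⟩ := finset_torsion_bound s hsT
  have hrange : LinearMap.range g' ≤ torsN R I E N := by
    rw [← hs, Submodule.span_le]
    exact fun e he => hN e he
  -- Artin-Rees
  obtain ⟨k, hk⟩ := Ideal.exists_pow_inf_eq_pow_smul I (J : Submodule R R)
  set m := N + k with hm
  have hAR : (I ^ m : Ideal R) ⊓ J ≤ I ^ N • (J : Submodule R R) := by
    have h1 : (I ^ m • ⊤ : Submodule R R) ⊓ J = I ^ (m - k) • (I ^ k • ⊤ ⊓ J) :=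
      hk m (by omega)
    have h2 : (I ^ m • ⊤ : Submodule R R) = I ^ m := by
      rw [Ideal.smul_eq_mul, Ideal.mul_top]
    have h3 : m - k = N := by omega
    rw [h2, h3] at h1
    rw [h1]
    exact Submodule.smul_mono le_rfl inf_le_right
  -- `g'` kills `I ^ m ⊓ J`
  have hkill : ∀ x : J, (x : R) ∈ (I ^ m : Ideal R) → g' x = 0 := by
    intro x hx
    have hx' : (x : R) ∈ I ^ N • (J : Submodule R R) := hAR ⟨hx, x.2⟩
    have hmap : (I ^ N • (J : Submodule R R)) =
        Submodule.map J.subtype (I ^ N • (⊤ : Submodule R J)) := by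
      rw [Submodule.map_smul'', Submodule.map_subtype_top]
    rw [hmap] at hx'
    obtain ⟨y, hy, hyx⟩ := hx'
    have hyx' : y = x := Subtype.ext hyx
    subst hyx'
    have : g' y ∈ Submodule.map g' (I ^ N • (⊤ : Submodule R J)) :=
      Submodule.mem_map_of_mem hy
    rw [Submodule.map_smul''] at this
    have hbot : I ^ N • Submodule.map g' (⊤ : Submodule R J) ≤ ⊥ := by
      rw [Submodule.smul_le]
      intro r hr e he
      rw [Submodule.map_top] at he
      have := hrange he
      exact (Submodule.mem_bot R).2 (this r hr)
    simpa using hbot this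
  -- factor through `R ⧸ I ^ m`
  let φ : J →ₗ[R] R ⧸ (I ^ m : Ideal R) := (I ^ m : Ideal R).mkQ ∘ₗ J.subtype
  let K : Submodule R J := LinearMap.ker φ
  have hKg' : K ≤ LinearMap.ker g' := by
    intro x hx
    have : (I ^ m : Ideal R).mkQ x = 0 := hx
    rw [Submodule.mkQ_apply, Submodule.Quotient.mk_eq_zero] at this
    exact hkill x this
  let gbar : (J ⧸ K) →ₗ[R] E := K.liftQ g' hKg'
  let φbar : (J ⧸ K) →ₗ[R] R ⧸ (I ^ m : Ideal R) := K.liftQ φ le_rfl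
  have hφbarinj : Function.Injective φbar :=
    LinearMap.ker_eq_bot.1 (Submodule.ker_liftQ_eq_bot K φ le_rfl le_rfl)
  obtain ⟨G, hG⟩ := hInj.out φbar hφbarinj gbar
  -- the element `e`
  set e : E := G (Submodule.Quotient.mk 1) with he_def
  have he : e ∈ torsionIdeal R I E := by
    refine ⟨m, fun a ha => ?_⟩
    rw [he_def, ← map_smul, ← Submodule.Quotient.mk_smul, smul_eq_mul, mul_one,
      (Submodule.Quotient.mk_eq_zero _).2 ha, map_zero]
  refine ⟨LinearMap.toSpanSingleton R (torsionIdeal R I E) ⟨e, he⟩, fun x hx => ?_⟩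
  apply Subtype.ext
  have h1 : (LinearMap.toSpanSingleton R (torsionIdeal R I E) ⟨e, he⟩ x : E) = x • e := rfl
  rw [h1]
  have h2 : x • e = G (Submodule.Quotient.mk x) := by
    rw [he_def, ← map_smul, ← Submodule.Quotient.mk_smul, smul_eq_mul, mul_one]
  have h3 : (Submodule.Quotient.mk x : R ⧸ (I ^ m : Ideal R)) = φbar (K.mkQ ⟨x, hx⟩) := by
    have : φbar (K.mkQ ⟨x, hx⟩) = φ ⟨x, hx⟩ := by
      rw [Submodule.mkQ_apply, Submodule.liftQ_apply]
    rw [this]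
    rfl
  rw [h2, h3, hG]
  have : gbar (K.mkQ ⟨x, hx⟩) = g' ⟨x, hx⟩ := by
    rw [Submodule.mkQ_apply, Submodule.liftQ_apply]
  rw [this, hg']

end Tors

section Embed
variable {R : Type u} [CommRing R] [IsNoetherianRing R] {I : Ideal R}

lemma torsionIdeal_eq_bot_of_injective {M N : Type u} [AddCommGroup M] [Module R M]
    [AddCommGroup N] [Module R N] (f : M →ₗ[R] N) (hf : Function.Injective f)
    (hN : torsionIdeal R I N = ⊥) : torsionIdeal R I M = ⊥ := by
  rw [Submodule.eq_bot_iff]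
  rintro x ⟨n, hn⟩
  have : f x ∈ torsionIdeal R I N := ⟨n, fun a ha => by rw [← map_smul, hn a ha, map_zero]⟩
  rw [hN, Submodule.mem_bot] at this
  exact hf (by rw [this, map_zero])

/-- Every `I`-torsion-free module embeds in an `I`-torsion-free injective module. -/
lemma step_exists (C : ModuleCat.{u} R) :
    ∃ (E : ModuleCat.{u} R) (f : C ⟶ E), CategoryTheory.Injective E ∧ Function.Injective f ∧
      (torsionIdeal R I C = ⊥ → torsionIdeal R I E = ⊥) := by
  by_cases hC : torsionIdeal R I C = ⊥
  · -- embed into an injective module, then project off the torsion part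
    let E₀ : ModuleCat.{u} R := Injective.under C
    let ι : C ⟶ E₀ := Injective.ι C
    have hι : Function.Injective ι := by
      rw [← ModuleCat.mono_iff_injective]
      infer_instance
    have hE₀cat : CategoryTheory.Injective (ModuleCat.of R E₀) := by
      show CategoryTheory.Injective E₀
      infer_instance
    have hE₀ : Module.Injective R E₀ := Module.injective_module_of_injective_object R E₀
    have hT : Module.Injective R (torsionIdeal R I E₀) :=
      (torsionIdeal_baer hE₀).injective
    obtain ⟨r, hr⟩ := hT.out (torsionIdeal R I E₀).subtype
      (Submodule.injective_subtype _) LinearMap.id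
    -- `r : E₀ →ₗ[R] torsionIdeal R I E₀` restricts to the identity on the torsion
    let kerr : Submodule R E₀ := LinearMap.ker r
    let s : E₀ →ₗ[R] kerr := LinearMap.codRestrict kerr
      (LinearMap.id - (torsionIdeal R I E₀).subtype ∘ₗ r)
      (fun x => by
        have h : r ((torsionIdeal R I E₀).subtype (r x)) = r x := hr (r x)
        rw [LinearMap.mem_ker]
        show r (x - (torsionIdeal R I E₀).subtype (r x)) = 0
        rw [map_sub, h, sub_self])
    have hs : ∀ z : kerr, s (z : E₀) = z := by
      intro z
      apply Subtype.ext
      have hz : r (z : E₀) = 0 := z.2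
      show (z : E₀) - (torsionIdeal R I E₀).subtype (r (z : E₀)) = (z : E₀)
      rw [hz]; simp
    have hkerrInj : Module.Injective R kerr := by
      constructor
      intro X Y _ _ _ _ f hf g
      obtain ⟨h, hh⟩ := hE₀.out f hf (kerr.subtype ∘ₗ g)
      refine ⟨s ∘ₗ h, fun x => ?_⟩
      simp only [LinearMap.coe_comp, Function.comp_apply, hh]
      exact hs (g x)
    have hkerrTors : torsionIdeal R I kerr = ⊥ := by
      rw [Submodule.eq_bot_iff]
      rintro z hz
      have hzE : (z : E₀) ∈ torsionIdeal R I E₀ := by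
        obtain ⟨n, hn⟩ := hz
        exact ⟨n, fun a ha => by
          have := congrArg (Subtype.val) (hn a ha)
          exact this⟩
      have h1 : r (z : E₀) = ⟨(z : E₀), hzE⟩ := hr ⟨(z : E₀), hzE⟩
      have h2 : r (z : E₀) = 0 := z.2
      have : ((⟨(z : E₀), hzE⟩ : torsionIdeal R I E₀) : E₀) = 0 := by
        rw [← h1, h2]; rfl
      exact Subtype.ext this
    -- the embedding
    let f : C ⟶ ModuleCat.of R kerr := ModuleCat.ofHom (s ∘ₗ ι.hom)
    refine ⟨ModuleCat.of R kerr, f, ?_, ?_, fun _ => hkerrTors⟩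
    · exact Module.injective_object_of_injective_module R kerr
    · intro x y hxy
      have h1 : s (ι x) = s (ι y) := hxy
      have h2 : ∀ c : C, ((s (ι c) : E₀)) = ι c - (torsionIdeal R I E₀).subtype (r (ι c)) :=
        fun c => rfl
      have h3 : ι x - (torsionIdeal R I E₀).subtype (r (ι x))
          = ι y - (torsionIdeal R I E₀).subtype (r (ι y)) := by
        rw [← h2, ← h2, h1]
      -- hence ι (x - y) is torsion
      have h4 : ι x - ι y = (torsionIdeal R I E₀).subtype (r (ι x) - r (ι y)) := by
        rw [map_sub]
        abel_nf at h3 ⊢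
        linear_combination (norm := module) h3
      have h5 : ι x - ι y ∈ torsionIdeal R I E₀ := by
        rw [h4]
        exact ((r (ι x) - r (ι y)) : torsionIdeal R I E₀).2
      have h6 : ι (x - y) ∈ torsionIdeal R I E₀ := by
        rw [map_sub]; exact h5
      have h7 : x - y ∈ torsionIdeal R I C := by
        obtain ⟨n, hn⟩ := h6
        exact ⟨n, fun a ha => hι (by rw [map_smul, hn a ha, map_zero])⟩
      rw [hC, Submodule.mem_bot, sub_eq_zero] at h7
      exact h7
  · exact ⟨Injective.under C, Injective.ι C, inferInstance,
      (ModuleCat.mono_iff_injective _).mp inferInstance, fun h => absurd h hC⟩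

end Embed

section Res
variable {R : Type u} [CommRing R] [IsNoetherianRing R] (I : Ideal R)

/-- An injective module containing `C`, which is `I`-torsion-free whenever `C` is. -/
noncomputable def stepE (C : ModuleCat.{u} R) : ModuleCat.{u} R :=
  (step_exists (I := I) C).choose

/-- The embedding of `C` into `stepE I C`. -/
noncomputable def stepι (C : ModuleCat.{u} R) : C ⟶ stepE I C :=
  (step_exists (I := I) C).choose_spec.choose

lemma stepE_injective (C : ModuleCat.{u} R) : CategoryTheory.Injective (stepE I C) :=
  (step_exists (I := I) C).choose_spec.choose_spec.1

lemma stepι_injective (C : ModuleCat.{u} R) : Function.Injective (stepι I C) :=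
  (step_exists (I := I) C).choose_spec.choose_spec.2.1

lemma stepE_torsion (C : ModuleCat.{u} R) (h : torsionIdeal R I C = ⊥) :
    torsionIdeal R I (stepE I C) = ⊥ :=
  (step_exists (I := I) C).choose_spec.choose_spec.2.2 h

/-- The cosyzygy modules of the resolution: `resC I M 0 = M`, and
`resC I M (i+1) = stepE I (resC I M i) ⧸ resC I M i`. -/
noncomputable def resC (M : ModuleCat.{u} R) : ℕ → ModuleCat.{u} R
  | 0 => M
  | (i + 1) => ModuleCat.of R
      ((stepE I (resC M i)) ⧸ LinearMap.range (stepι I (resC M i)).hom)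

variable (M : ModuleCat.{u} R)

/-- The modules of the resolution. -/
noncomputable abbrev resE (i : ℕ) : ModuleCat.{u} R := stepE I (resC I M i)

/-- The quotient map `resE I M i → resC I M (i+1)`. -/
noncomputable def resq (i : ℕ) : resE I M i ⟶ resC I M (i + 1) :=
  ModuleCat.ofHom (LinearMap.range (stepι I (resC I M i)).hom).mkQ

/-- The differentials of the resolution. -/
noncomputable def resd (i : ℕ) : resE I M i ⟶ resE I M (i + 1) :=
  resq I M i ≫ stepι I (resC I M (i + 1))

lemma stepι_comp_resq (i : ℕ) :
    stepι I (resC I M i) ≫ resq I M i = 0 := by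
  apply ModuleCat.hom_ext; apply LinearMap.ext
  intro x
  show (LinearMap.range (stepι I (resC I M i)).hom).mkQ (stepι I (resC I M i) x) = 0
  rw [Submodule.mkQ_apply]
  exact (Submodule.Quotient.mk_eq_zero _).2 ⟨x, rfl⟩

lemma resd_comp_resd (i : ℕ) : resd I M i ≫ resd I M (i + 1) = 0 := by
  show (resq I M i ≫ stepι I (resC I M (i + 1))) ≫
    (resq I M (i + 1) ≫ stepι I (resC I M (i + 2))) = 0
  rw [Category.assoc, ← Category.assoc (stepι I (resC I M (i + 1))),
    stepι_comp_resq, Limits.zero_comp, Limits.comp_zero]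

/-- The cochain complex of the resolution. -/
noncomputable def resCx : CochainComplex (ModuleCat.{u} R) ℕ :=
  CochainComplex.of (resE I M) (resd I M) (resd_comp_resd I M)

lemma resCx_d (i : ℕ) : (resCx I M).d i (i + 1) = resd I M i :=
  CochainComplex.of_d _ _ i

lemma resCx_exactAt_succ (n : ℕ) : (resCx I M).ExactAt (n + 1) := by
  rw [HomologicalComplex.exactAt_iff' _ n (n + 1) (n + 2) (by simp) (by simp)]
  rw [ShortComplex.moduleCat_exact_iff]
  intro x hx
  -- `x : resE I M (n+1)`, `hx : (resCx I M).d (n+1) (n+2) x = 0`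
  have hx' : resd I M (n + 1) x = 0 := by
    rw [← resCx_d I M (n + 1)]
    exact hx
  have h1 : stepι I (resC I M (n + 2)) (resq I M (n + 1) x) = 0 := hx'
  have h2 : resq I M (n + 1) x = 0 := stepι_injective I _ (by rw [h1, map_zero])
  have h2' : Submodule.Quotient.mk x =
      (0 : (resE I M (n+1) : Type u) ⧸ LinearMap.range (stepι I (resC I M (n + 1))).hom) := h2
  obtain ⟨y, hy⟩ := (Submodule.Quotient.mk_eq_zero _).1 h2'
  obtain ⟨z, hz⟩ := Submodule.mkQ_surjective _ y
  refine ⟨z, ?_⟩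
  show (resCx I M).d n (n + 1) z = x
  rw [resCx_d I M n]
  show stepι I (resC I M (n + 1)) (resq I M n z) = x
  have : resq I M n z = y := hz
  rw [this, hy]

lemma stepι_comp_resd (i : ℕ) :
    stepι I (resC I M i) ≫ resd I M i = 0 := by
  show stepι I (resC I M i) ≫ (resq I M i ≫ stepι I (resC I M (i + 1))) = 0
  rw [← Category.assoc, stepι_comp_resq, Limits.zero_comp]

lemma resS₀_w : ModuleCat.ofHom (stepι I (resC I M 0)).hom ≫ (resCx I M).d 0 1 = 0 := by
  rw [resCx_d I M 0]; exact stepι_comp_resd I M 0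

/-- The short complex `M ⟶ resE 0 ⟶ resE 1`. -/
noncomputable def resS₀ : ShortComplex (ModuleCat.{u} R) :=
  ShortComplex.mk (ModuleCat.ofHom (stepι I (resC I M 0)).hom) ((resCx I M).d 0 1) (resS₀_w I M)

lemma resS₀_exact : (resS₀ I M).Exact := by
  rw [ShortComplex.moduleCat_exact_iff]
  intro x hx
  have hx' : resd I M 0 x = 0 := by
    rw [← resCx_d I M 0]
    exact hx
  have h1 : resq I M 0 x = 0 := stepι_injective I _ (by
    have : stepι I (resC I M 1) (resq I M 0 x) = 0 := hx'
    rw [this, map_zero])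
  have h2' : Submodule.Quotient.mk x =
      (0 : (resE I M 0 : Type u) ⧸ LinearMap.range (stepι I (resC I M 0)).hom) := h1
  exact (Submodule.Quotient.mk_eq_zero _).1 h2'

/-- The injective resolution of `M` built out of torsion-controlled injectives. -/
noncomputable def resIR : InjectiveResolution M where
  cocomplex := resCx I M
  injective n := stepE_injective I (resC I M n)
  ι := (CochainComplex.fromSingle₀Equiv _ _).symm
    ⟨stepι I (resC I M 0), by rw [resCx_d I M 0]; exact stepι_comp_resd I M 0⟩
  quasiIso := ⟨fun n => by
    cases n with
    | zero =>
      rw [CochainComplex.quasiIsoAt₀_iff, ShortComplex.quasiIso_iff_of_zeros]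
      · refine (ShortComplex.exact_and_mono_f_iff_of_iso ?_).2
          ⟨resS₀_exact I M, (ModuleCat.mono_iff_injective _).2 (stepι_injective I _)⟩
        exact ShortComplex.isoMk (Iso.refl _) (Iso.refl _) (Iso.refl _) (by simp [resS₀]; rfl)
          (by simp [resS₀]; exact (Category.id_comp _).trans (Category.comp_id _).symm)
      all_goals rfl
    | succ n =>
      rw [quasiIsoAt_iff_exactAt]
      · exact resCx_exactAt_succ I M n
      · exact CochainComplex.exactAt_succ_single_obj _ _⟩

end Res

section Main
variable {R : Type u} [CommRing R] [IsNoetherianRing R] (I : Ideal R) (M : ModuleCat.{u} R)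

/-- If the `i`-th term of an injective resolution is `I`-torsion-free, then `H^i_I(M) = 0`. -/
lemma isZero_localCohomology_of_torsion_eq_bot (res : InjectiveResolution M) (i : ℕ)
    (h : torsionIdeal R I (res.cocomplex.X i) = ⊥) :
    IsZero ((localCohomologyIdeal R I i).obj M) := by
  set K := (((torsionIdealFunctor R I).mapHomologicalComplex _).obj res.cocomplex) with hK
  have h1 : IsZero (K.X i) := by
    have : Subsingleton (torsionIdeal R I (res.cocomplex.X i)) :=
      Submodule.subsingleton_iff_eq_bot.mpr h
    show IsZero (ModuleCat.of R (torsionIdeal R I (res.cocomplex.X i)))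
    haveI : Subsingleton ((ModuleCat.of R (torsionIdeal R I (res.cocomplex.X i))) : Type u) :=
      this
    exact ModuleCat.isZero_of_subsingleton _
  have h2 : K.ExactAt i := by
    rw [HomologicalComplex.exactAt_iff]
    exact ShortComplex.exact_of_isZero_X₂ _ h1
  have h3 : IsZero (K.homology i) :=
    (HomologicalComplex.exactAt_iff_isZero_homology K i).1 h2
  exact h3.of_iso (res.isoRightDerivedObj (torsionIdealFunctor R I) i)

/-- If all elements of the torsion of `resE I M i` in the kernel of the differential vanish,
then the `i`-th cosyzygy is torsion-free. -/
lemma torsion_resC_step (i : ℕ)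
    (hker : ∀ x : (torsionIdeal R I (resE I M i)),
      (resCx I M).d i (i + 1) (x : resE I M i) = 0 → (x : resE I M i) = 0) :
    torsionIdeal R I (resC I M i) = ⊥ := by
  rw [Submodule.eq_bot_iff]
  intro c hc
  have hmem : stepι I (resC I M i) c ∈ torsionIdeal R I (resE I M i) := by
    obtain ⟨m, hm⟩ := hc
    refine ⟨m, fun a ha => ?_⟩
    have h1 : stepι I (resC I M i) (a • c) = a • stepι I (resC I M i) c := map_smul _ a c
    rw [← h1, hm a ha, map_zero]
  have hd : (resCx I M).d i (i + 1) (stepι I (resC I M i) c) = 0 := by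
    rw [resCx_d]
    show stepι I (resC I M (i + 1)) (resq I M i (stepι I (resC I M i) c)) = 0
    have h0 : resq I M i (stepι I (resC I M i) c) = 0 := by
      show (LinearMap.range (stepι I (resC I M i)).hom).mkQ (stepι I (resC I M i) c) = 0
      rw [Submodule.mkQ_apply]
      exact (Submodule.Quotient.mk_eq_zero _).2 ⟨c, rfl⟩
    rw [h0, map_zero]
  have : stepι I (resC I M i) c = 0 := hker ⟨_, hmem⟩ hd
  exact stepι_injective I _ (by rw [this, map_zero])

lemma main_forward (n : ℕ)
    (hvan : ∀ i : ℕ, i ≤ n → IsZero ((localCohomologyIdeal R I i).obj M)) :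
    ∀ i : ℕ, i ≤ n → torsionIdeal R I (resE I M i) = ⊥ := by
  set K := (((torsionIdealFunctor R I).mapHomologicalComplex
    (ComplexShape.up ℕ)).obj (resIR I M).cocomplex) with hK
  have hhom : ∀ i : ℕ, i ≤ n → K.ExactAt i := by
    intro i hi
    have hzero : IsZero (K.homology i) :=
      (hvan i hi).of_iso ((resIR I M).isoRightDerivedObj (torsionIdealFunctor R I) i).symm
    exact (HomologicalComplex.exactAt_iff_isZero_homology K i).2 hzero
  intro i hi
  induction i with
  | zero =>
    refine stepE_torsion I _ (torsion_resC_step I M 0 ?_)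
    intro x hx
    have hex := (HomologicalComplex.exactAt_iff' K 0 0 1 (by simp) (by simp)).1 (hhom 0 hi)
    rw [ShortComplex.moduleCat_exact_iff] at hex
    have hgx : (K.sc' 0 0 1).g x = 0 := by
      apply Subtype.ext
      exact hx
    obtain ⟨y, hy⟩ := hex x hgx
    have hf0 : (K.sc' 0 0 1).f = 0 := K.shape 0 0 (by simp)
    rw [hf0] at hy
    have : x = (0 : torsionIdeal R I (resE I M 0)) := by rw [← hy]; rfl
    rw [this]
    rfl
  | succ i ih =>
    have hEi : torsionIdeal R I (resE I M i) = ⊥ := ih (by omega)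
    refine stepE_torsion I _ (torsion_resC_step I M (i + 1) ?_)
    intro x hx
    have hex := (HomologicalComplex.exactAt_iff' K i (i + 1) (i + 2)
      (by simp) (by simp)).1 (hhom (i + 1) hi)
    rw [ShortComplex.moduleCat_exact_iff] at hex
    have hgx : (K.sc' i (i + 1) (i + 2)).g x = 0 := by
      apply Subtype.ext
      exact hx
    obtain ⟨y, hy⟩ := hex x hgx
    have hsub : Subsingleton ((K.sc' i (i + 1) (i + 2)).X₁ : Type u) := by
      show Subsingleton (torsionIdeal R I (resE I M i))
      exact Submodule.subsingleton_iff_eq_bot.mpr hEi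
    have hy0 : y = 0 := Subsingleton.elim y 0
    rw [hy0, map_zero] at hy
    have : x = (0 : torsionIdeal R I (resE I M (i + 1))) := hy.symm
    rw [this]
    rfl

theorem main_thm (n : ℕ) :
    (∀ i : ℕ, i ≤ n → IsZero ((localCohomologyIdeal R I i).obj M)) ↔
      ∃ res : InjectiveResolution M,
        ∀ i : ℕ, i ≤ n → ∀ q ∈ associatedPrimes R (res.cocomplex.X i), ¬ I ≤ q := by
  constructor
  · intro hvan
    refine ⟨resIR I M, fun i hi q hq => ?_⟩
    have h := main_forward I M n hvan i hi
    exact (torsionIdeal_eq_bot_iff_assoc.mp h) q hq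
  · rintro ⟨res, hres⟩ i hi
    exact isZero_localCohomology_of_torsion_eq_bot I M res i
      (torsionIdeal_eq_bot_iff_assoc.mpr (hres i hi))

end Main

/-- Let `R` be a commutative noetherian ring, `I` an ideal, `M` an `R`-module, `n ≥ 0`. Then
`H^i_I(M) = 0` for all `0 ≤ i ≤ n` iff there is an injective resolution `0 → M → I^0 → I^1 → ⋯`
with `Ass I^i ∩ V(I) = ∅` for all `0 ≤ i ≤ n`. -/
theorem localCohomologyIdeal_vanishing_iff_injectiveResolution
    (R : Type u) [CommRing R] [IsNoetherianRing R] (I : Ideal R) (n : ℕ)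
    (M : ModuleCat.{u} R) :
    (∀ i : ℕ, i ≤ n → IsZero ((localCohomologyIdeal R I i).obj M)) ↔
      ∃ res : InjectiveResolution M,
        ∀ i : ℕ, i ≤ n → ∀ q ∈ associatedPrimes R (res.cocomplex.X i), ¬ I ≤ q := by
  exact main_thm I M n
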